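/- arXiv:1510.04093 — 2 statements merged into one kernel-verified Lean document; each statement's English description precedes it below -/
import Mathlib

section
/- Let d ≥ 3, let A = {|a_1⟩,…,|a_d⟩} and B = {|b_1⟩,…,|b_d⟩} be orthonormal bases of ℂ^d, and let 0 < α ≤ 1 + 2/log₂(d−1) with α ≠ 1. Then the infimum over all density matrices ρ of H_α(p_ρ^A) + H_α(q_ρ^{A→B}) equals min_{1≤i≤d} (1/(1−α)) log₂(Σ_{j=1}^d |⟨a_i|b_j⟩|^{2α}), and the infimum is attained at ρ = |a_i⟩⟨a_i| for a minimizing index i. -/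
open Matrix
open scoped BigOperators ComplexOrder

/-- The inner product ⟨x|y⟩ on ℂ^d. -/
noncomputable def qinner {d : ℕ} (x y : Fin d → ℂ) : ℂ := star x ⬝ᵥ y

/-- `a` is an orthonormal basis of ℂ^d (d orthonormal vectors). -/
def IsONB {d : ℕ} (a : Fin d → (Fin d → ℂ)) : Prop :=
  ∀ i j, qinner (a i) (a j) = if i = j then 1 else 0

/-- Measurement distribution p_ρ^B(j) = ⟨b_j|ρ|b_j⟩. -/
noncomputable def probB {d : ℕ} (ρ : Matrix (Fin d) (Fin d) ℂ)
    (b : Fin d → (Fin d → ℂ)) (j : Fin d) : ℝ :=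
  (qinner (b j) (ρ *ᵥ b j)).re

/-- Distribution of a B-measurement after a non-selective A-measurement:
q_ρ^{A→B}(j) = Σ_i ⟨a_i|ρ|a_i⟩ |⟨a_i|b_j⟩|². -/
noncomputable def probAB {d : ℕ} (ρ : Matrix (Fin d) (Fin d) ℂ)
    (a b : Fin d → (Fin d → ℂ)) (j : Fin d) : ℝ :=
  ∑ i, probB ρ a i * ‖qinner (a i) (b j)‖ ^ 2

/-- Tsallis entropy of order α. -/
noncomputable def tsallis {d : ℕ} (α : ℝ) (p : Fin d → ℝ) : ℝ :=
  (1 / (1 - α)) * ((∑ j, p j ^ α) - 1)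

/-- Rank-one projector |v⟩⟨v|. -/
noncomputable def proj {d : ℕ} (v : Fin d → ℂ) : Matrix (Fin d) (Fin d) ℂ :=
  vecMulVec v (star v)


/-- Rényi entropy of order α (base-2 logarithm). -/
noncomputable def renyi {d : ℕ} (α : ℝ) (p : Fin d → ℝ) : ℝ :=
  (1 / (1 - α)) * Real.logb 2 (∑ j, p j ^ α)

section Aux

variable {d : ℕ}

/-- Completeness relation for an orthonormal basis. -/
lemma onb_complete {a : Fin d → Fin d → ℂ} (ha : IsONB a) (k l : Fin d) :
    ∑ i, a i k * star (a i l) = if k = l then 1 else 0 := by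
  classical
  set U : Matrix (Fin d) (Fin d) ℂ := Matrix.of fun i k => a i k with hU
  have h1 : U * Uᴴ = 1 := by
    ext i j
    have hji := ha j i
    simp only [qinner, dotProduct, Pi.star_apply] at hji
    simp only [Matrix.mul_apply, Matrix.conjTranspose_apply, hU, Matrix.of_apply,
      Matrix.one_apply]
    rw [show ∑ k, a i k * star (a j k) = ∑ k, star (a j k) * a i k from
      Finset.sum_congr rfl fun _ _ => mul_comm _ _, hji]
    by_cases h : i = j <;> simp [h, eq_comm]
  have h2 : Uᴴ * U = 1 := mul_eq_one_comm.mp h1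
  have h3 : (Uᴴ * U) l k = (1 : Matrix (Fin d) (Fin d) ℂ) l k := by rw [h2]
  simp only [Matrix.mul_apply, Matrix.conjTranspose_apply, hU, Matrix.of_apply,
    Matrix.one_apply] at h3
  rw [show ∑ i, a i k * star (a i l) = ∑ i, star (a i l) * a i k from
    Finset.sum_congr rfl fun _ _ => mul_comm _ _, h3]
  by_cases h : k = l <;> simp [h, eq_comm]

/-- Sum of diagonal matrix elements in an ONB is the trace. -/
lemma sum_qinner_eq_trace {a : Fin d → Fin d → ℂ} (ha : IsONB a)
    (ρ : Matrix (Fin d) (Fin d) ℂ) :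
    ∑ i, qinner (a i) (ρ *ᵥ a i) = ρ.trace := by
  classical
  have key : ∑ i, qinner (a i) (ρ *ᵥ a i)
      = ∑ k, ∑ l, ρ k l * ∑ i, a i l * star (a i k) := by
    simp only [qinner, dotProduct, Pi.star_apply, Matrix.mulVec, dotProduct,
      Finset.mul_sum, Finset.sum_mul]
    rw [Finset.sum_comm]
    refine Finset.sum_congr rfl fun k _ => ?_
    rw [Finset.sum_comm]
    exact Finset.sum_congr rfl fun l _ => Finset.sum_congr rfl fun i _ => by ring
  rw [key]
  have : ∀ k, ∑ l, ρ k l * ∑ i, a i l * star (a i k) = ρ k k := by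
    intro k
    have : ∀ l, ρ k l * ∑ i, a i l * star (a i k) = if l = k then ρ k l else 0 := by
      intro l
      rw [onb_complete ha l k]
      by_cases h : l = k <;> simp [h]
    rw [Finset.sum_congr rfl fun l _ => this l]
    simp
  rw [Finset.sum_congr rfl fun k _ => this k]
  rfl

lemma sum_probB_eq_one {ρ : Matrix (Fin d) (Fin d) ℂ} (hρt : ρ.trace = 1)
    {c : Fin d → Fin d → ℂ} (hc : IsONB c) : ∑ j, probB ρ c j = 1 := by
  unfold probB
  rw [← Complex.re_sum, sum_qinner_eq_trace hc ρ, hρt, Complex.one_re]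

lemma probB_nonneg {ρ : Matrix (Fin d) (Fin d) ℂ} (hρ : ρ.PosSemidef)
    (c : Fin d → Fin d → ℂ) (j : Fin d) : 0 ≤ probB ρ c j := by
  have := hρ.dotProduct_mulVec_nonneg (c j)
  rw [Complex.le_def] at this
  simpa [probB, qinner] using this.1

lemma proj_mulVec (v y : Fin d → ℂ) : proj v *ᵥ y = qinner v y • v := by
  ext m
  simp only [proj, Matrix.mulVec, dotProduct, Matrix.vecMulVec_apply, qinner,
    Pi.smul_apply, smul_eq_mul, Pi.star_apply, Finset.sum_mul]
  exact Finset.sum_congr rfl fun l _ => by ring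

lemma qinner_smul (x : Fin d → ℂ) (c : ℂ) (y : Fin d → ℂ) :
    qinner x (c • y) = c * qinner x y := by
  simp only [qinner, dotProduct, Pi.smul_apply, smul_eq_mul, Pi.star_apply,
    Finset.mul_sum]
  exact Finset.sum_congr rfl fun k _ => by ring

lemma qinner_star (x y : Fin d → ℂ) : star (qinner x y) = qinner y x := by
  simp only [qinner, dotProduct, Pi.star_apply, star_sum, star_mul', star_star]
  exact Finset.sum_congr rfl fun k _ => by ring

lemma probB_proj (v : Fin d → ℂ) (c : Fin d → Fin d → ℂ) (j : Fin d) :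
    probB (proj v) c j = ‖qinner v (c j)‖ ^ 2 := by
  unfold probB
  rw [proj_mulVec, qinner_smul]
  have : qinner (c j) v = star (qinner v (c j)) := (qinner_star v (c j)).symm
  rw [this]
  rw [show qinner v (c j) * star (qinner v (c j))
      = ((Complex.normSq (qinner v (c j)) : ℝ) : ℂ) from Complex.mul_conj _]
  rw [Complex.ofReal_re, Complex.normSq_eq_norm_sq]

lemma proj_posSemidef (v : Fin d → ℂ) : (proj v).PosSemidef := by
  rw [Matrix.posSemidef_iff_dotProduct_mulVec]
  constructor
  · ext i j
    simp only [Matrix.conjTranspose_apply, proj, Matrix.vecMulVec_apply, star_mul',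
      star_star, Pi.star_apply]
    ring
  · intro x
    have : star x ⬝ᵥ (proj v *ᵥ x) = qinner v x * star (qinner v x) := by
      rw [proj_mulVec, dotProduct_smul, smul_eq_mul, qinner_star v x]
      rfl
    rw [this]
    exact mul_star_self_nonneg _

lemma trace_proj (v : Fin d → ℂ) : (proj v).trace = qinner v v := by
  simp only [Matrix.trace, Matrix.diag, proj, Matrix.vecMulVec_apply, qinner,
    dotProduct, Pi.star_apply]
  exact Finset.sum_congr rfl fun k _ => mul_comm _ _

lemma renyi_delta (α : ℝ) (hα : 0 < α) (i : Fin d) :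
    renyi α (fun k => if k = i then (1 : ℝ) else 0) = 0 := by
  classical
  unfold renyi
  have : ∀ k : Fin d, ((if k = i then (1 : ℝ) else 0)) ^ α = if k = i then 1 else 0 := by
    intro k
    split
    · exact Real.one_rpow α
    · exact Real.zero_rpow hα.ne'
  rw [Finset.sum_congr rfl fun k _ => this k]
  simp

lemma renyi_nonneg_of_dist (α : ℝ) (hα : 0 < α) (hα1 : α ≠ 1) (p : Fin d → ℝ)
    (hp : ∀ j, 0 ≤ p j) (hsum : ∑ j, p j = 1) : 0 ≤ renyi α p := by
  classical
  have hple : ∀ j, p j ≤ 1 := by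
    intro j
    calc p j ≤ ∑ k, p k := Finset.single_le_sum (fun k _ => hp k) (Finset.mem_univ j)
    _ = 1 := hsum
  unfold renyi
  rcases lt_or_gt_of_ne hα1 with hlt | hgt
  · -- α < 1 : ∑ p^α ≥ 1
    have h1 : (1 : ℝ) ≤ ∑ j, p j ^ α := by
      rw [← hsum]
      refine Finset.sum_le_sum fun j _ => ?_
      rcases eq_or_lt_of_le (hp j) with h0 | h0
      · rw [← h0, Real.zero_rpow hα.ne']
      · calc p j = p j ^ (1 : ℝ) := (Real.rpow_one _).symm
        _ ≤ p j ^ α := Real.rpow_le_rpow_of_exponent_ge h0 (hple j) hlt.le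
    have := Real.logb_nonneg (by norm_num : (1:ℝ) < 2) h1
    have hm : 0 < 1 / (1 - α) := by
      apply div_pos one_pos; linarith
    positivity
  · -- α > 1 : ∑ p^α ≤ 1
    have h1 : ∑ j, p j ^ α ≤ 1 := by
      rw [← hsum]
      refine Finset.sum_le_sum fun j _ => ?_
      rcases eq_or_lt_of_le (hp j) with h0 | h0
      · rw [← h0, Real.zero_rpow hα.ne']
      · calc p j ^ α ≤ p j ^ (1 : ℝ) :=
            Real.rpow_le_rpow_of_exponent_ge h0 (hple j) hgt.le
        _ = p j := Real.rpow_one _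
    have h0 : 0 ≤ ∑ j, p j ^ α :=
      Finset.sum_nonneg fun j _ => Real.rpow_nonneg (hp j) α
    have hlb := Real.logb_nonpos (by norm_num : (1:ℝ) < 2) h0 h1
    have hm : 1 / (1 - α) ≤ 0 := by
      apply div_nonpos_of_nonneg_of_nonpos zero_le_one; linarith
    nlinarith [hm, hlb]

end Aux

theorem renyi_succ_EUR {d : ℕ} (hd : 3 ≤ d) (a b : Fin d → (Fin d → ℂ))
    (ha : IsONB a) (hb : IsONB b) (α : ℝ) (hα : 0 < α)
    (hα' : α ≤ 1 + 2 / Real.logb 2 ((d : ℝ) - 1)) (hα1 : α ≠ 1) :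
    IsLeast {x : ℝ | ∃ ρ : Matrix (Fin d) (Fin d) ℂ, ρ.PosSemidef ∧ ρ.trace = 1 ∧
        x = renyi α (probB ρ a) + renyi α (probAB ρ a b)}
      (⨅ i : Fin d, (1 / (1 - α)) * Real.logb 2 (∑ j, ‖qinner (a i) (b j)‖ ^ (2 * α))) ∧
    ∃ i : Fin d,
      (∀ k : Fin d, (1 / (1 - α)) * Real.logb 2 (∑ j, ‖qinner (a i) (b j)‖ ^ (2 * α))
          ≤ (1 / (1 - α)) * Real.logb 2 (∑ j, ‖qinner (a k) (b j)‖ ^ (2 * α))) ∧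
      renyi α (probB (proj (a i)) a) + renyi α (probAB (proj (a i)) a b)
        = ⨅ k : Fin d, (1 / (1 - α)) * Real.logb 2 (∑ j, ‖qinner (a k) (b j)‖ ^ (2 * α)) := by
  classical
  have hdpos : 0 < d := by omega
  have hne : Nonempty (Fin d) := ⟨⟨0, hdpos⟩⟩
  -- notation
  set C : Fin d → Fin d → ℝ := fun i j => ‖qinner (a i) (b j)‖ ^ 2 with hCdef
  set F : Fin d → ℝ := fun i => ∑ j, (C i j) ^ α with hFdef
  set G : Fin d → ℝ := fun i => (1 / (1 - α)) * Real.logb 2 (∑ j, ‖qinner (a i) (b j)‖ ^ (2 * α))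
    with hGdef
  -- relation between the two exponent forms
  have hGF : ∀ k, G k = (1 / (1 - α)) * Real.logb 2 (F k) := by
    intro k
    simp only [hGdef, hFdef, hCdef]
    congr 2
    refine Finset.sum_congr rfl fun j _ => ?_
    rw [← Real.rpow_natCast ‖qinner (a k) (b j)‖ 2, ← Real.rpow_mul (norm_nonneg _)]
    norm_num
  -- basic facts about C
  have hCnn : ∀ i j, 0 ≤ C i j := fun i j => by positivity
  have hCsum : ∀ i, ∑ j, C i j = 1 := by
    intro i
    have htr : (proj (a i)).trace = 1 := by
      rw [trace_proj, ha i i]; simp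
    have : ∀ j, C i j = probB (proj (a i)) b j := fun j => (probB_proj (a i) b j).symm
    rw [Finset.sum_congr rfl fun j _ => this j]
    exact sum_probB_eq_one htr hb
  have hFpos : ∀ i, 0 < F i := by
    intro i
    refine Finset.sum_pos' (fun j _ => Real.rpow_nonneg (hCnn i j) α) ?_
    by_contra h
    push_neg at h
    have hzero : ∀ j, C i j = 0 := by
      intro j
      have h1 := h j (Finset.mem_univ j)
      have h2 : (C i j) ^ α = 0 := le_antisymm h1 (Real.rpow_nonneg (hCnn i j) α)
      by_contra hne0
      have : 0 < C i j := lt_of_le_of_ne (hCnn i j) (Ne.symm hne0)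
      exact absurd h2 (ne_of_gt (Real.rpow_pos_of_pos this α))
    have := hCsum i
    rw [Finset.sum_congr rfl fun j _ => hzero j] at this
    simp at this
  -- choose minimizing index for G
  obtain ⟨i₀, -, hi₀⟩ := Finset.exists_min_image Finset.univ G ⟨⟨0, hdpos⟩, Finset.mem_univ _⟩
  have hi₀' : ∀ k, G i₀ ≤ G k := fun k => hi₀ k (Finset.mem_univ k)
  have hInf : ⨅ k, G k = G i₀ :=
    le_antisymm (ciInf_le (Finite.bddBelow_range G) i₀) (le_ciInf hi₀')
  -- attainment: ρ = proj (a i₀)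
  have hattain : ∀ i : Fin d,
      renyi α (probB (proj (a i)) a) + renyi α (probAB (proj (a i)) a b) = G i := by
    intro i
    have hPBi : probB (proj (a i)) a = fun k => if k = i then (1 : ℝ) else 0 := by
      funext k
      rw [probB_proj, ha i k]
      by_cases h : k = i
      · simp [h]
      · have h' : ¬ (i = k) := fun hh => h hh.symm
        simp [h, h']
    have h1 : renyi α (probB (proj (a i)) a) = 0 := by
      rw [hPBi]; exact renyi_delta α hα i
    have hQB : probAB (proj (a i)) a b = fun j => C i j := by
      funext j
      unfold probAB
      rw [Finset.sum_congr rfl fun k _ => by rw [hPBi]]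
      simp only [ite_mul, one_mul, zero_mul]
      rw [Finset.sum_ite_eq' Finset.univ i (fun k => ‖qinner (a k) (b j)‖ ^ 2)]
      simp [hCdef]
    have h2 : renyi α (probAB (proj (a i)) a b) = (1 / (1 - α)) * Real.logb 2 (F i) := by
      rw [hQB]; rfl
    rw [h1, h2, zero_add, ← hGF]
  -- relation between extremality of G and of F
  have hFcomp : ∀ i k : Fin d, G i ≤ G k →
      ((α < 1 → F i ≤ F k) ∧ (1 < α → F k ≤ F i)) := by
    intro i k hGik
    rw [hGF i, hGF k] at hGik
    constructor
    · intro hlt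
      have hm : 0 < 1 / (1 - α) := by apply div_pos one_pos; linarith
      have hlog : Real.logb 2 (F i) ≤ Real.logb 2 (F k) :=
        le_of_mul_le_mul_left (by linarith [hGik]) hm
      exact (Real.logb_le_logb (by norm_num) (hFpos i) (hFpos k)).mp hlog
    · intro hgt
      have hm : 1 / (1 - α) < 0 := by
        apply div_neg_of_pos_of_neg one_pos; linarith
      have hlog : Real.logb 2 (F k) ≤ Real.logb 2 (F i) := by
        by_contra hcon
        push_neg at hcon
        have := mul_lt_mul_of_neg_left hcon hm
        linarith
      exact (Real.logb_le_logb (by norm_num) (hFpos k) (hFpos i)).mp hlog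
  -- the key lower bound
  have hlb : ∀ ρ : Matrix (Fin d) (Fin d) ℂ, ρ.PosSemidef → ρ.trace = 1 →
      G i₀ ≤ renyi α (probB ρ a) + renyi α (probAB ρ a b) := by
    intro ρ hPSD htr
    set P : Fin d → ℝ := probB ρ a with hPdef
    have hPnn : ∀ i, 0 ≤ P i := fun i => probB_nonneg hPSD a i
    have hPsum : ∑ i, P i = 1 := sum_probB_eq_one htr ha
    have hQeq : probAB ρ a b = fun j => ∑ i, P i * C i j := rfl
    have h1 : 0 ≤ renyi α (probB ρ a) :=
      renyi_nonneg_of_dist α hα hα1 P hPnn hPsum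
    -- second term
    have h2 : G i₀ ≤ renyi α (probAB ρ a b) := by
      rw [hQeq]
      unfold renyi
      rcases lt_or_gt_of_ne hα1 with hlt | hgt
      · -- α < 1 : concavity
        have hFmin : ∀ k, F i₀ ≤ F k := fun k => (hFcomp i₀ k (hi₀' k)).1 hlt
        have hjensen : ∀ j, ∑ i, P i * (C i j) ^ α ≤ (∑ i, P i * C i j) ^ α := by
          intro j
          have hcc := Real.concaveOn_rpow hα.le hlt.le
          have := hcc.le_map_sum (t := Finset.univ)
            (fun i _ => hPnn i) hPsum (fun i _ => Set.mem_Ici.mpr (hCnn i j))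
          simpa only [smul_eq_mul] using this
        have hbig : F i₀ ≤ ∑ j, (∑ i, P i * C i j) ^ α := by
          have step1 : ∑ j, ∑ i, P i * (C i j) ^ α ≤ ∑ j, (∑ i, P i * C i j) ^ α :=
            Finset.sum_le_sum fun j _ => hjensen j
          have step2 : F i₀ ≤ ∑ j, ∑ i, P i * (C i j) ^ α := by
            rw [Finset.sum_comm]
            have : ∑ i, ∑ j, P i * (C i j) ^ α = ∑ i, P i * F i := by
              refine Finset.sum_congr rfl fun i _ => ?_
              rw [hFdef, Finset.mul_sum]
            rw [this]
            calc F i₀ = ∑ i, P i * F i₀ := by rw [← Finset.sum_mul, hPsum, one_mul]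
            _ ≤ ∑ i, P i * F i :=
              Finset.sum_le_sum fun i _ => mul_le_mul_of_nonneg_left (hFmin i) (hPnn i)
          linarith
        have hm : 0 < 1 / (1 - α) := by apply div_pos one_pos; linarith
        have hlog : Real.logb 2 (F i₀) ≤ Real.logb 2 (∑ j, (∑ i, P i * C i j) ^ α) :=
          Real.logb_le_logb_of_le (by norm_num) (hFpos i₀) hbig
        rw [hGF i₀]
        exact mul_le_mul_of_nonneg_left hlog hm.le
      · -- α > 1 : convexity
        have hFmax : ∀ k, F k ≤ F i₀ := fun k => (hFcomp i₀ k (hi₀' k)).2 hgt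
        have hjensen : ∀ j, (∑ i, P i * C i j) ^ α ≤ ∑ i, P i * (C i j) ^ α := by
          intro j
          have hcv := convexOn_rpow hgt.le
          have := hcv.map_sum_le (t := Finset.univ)
            (fun i _ => hPnn i) hPsum (fun i _ => Set.mem_Ici.mpr (hCnn i j))
          simpa only [smul_eq_mul] using this
        have hbig : ∑ j, (∑ i, P i * C i j) ^ α ≤ F i₀ := by
          have step1 : ∑ j, (∑ i, P i * C i j) ^ α ≤ ∑ j, ∑ i, P i * (C i j) ^ α :=
            Finset.sum_le_sum fun j _ => hjensen j
          have step2 : ∑ j, ∑ i, P i * (C i j) ^ α ≤ F i₀ := by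
            rw [Finset.sum_comm]
            have : ∑ i, ∑ j, P i * (C i j) ^ α = ∑ i, P i * F i := by
              refine Finset.sum_congr rfl fun i _ => ?_
              rw [hFdef, Finset.mul_sum]
            rw [this]
            calc ∑ i, P i * F i ≤ ∑ i, P i * F i₀ :=
              Finset.sum_le_sum fun i _ => mul_le_mul_of_nonneg_left (hFmax i) (hPnn i)
            _ = F i₀ := by rw [← Finset.sum_mul, hPsum, one_mul]
          linarith
        have hQpos : 0 < ∑ j, (∑ i, P i * C i j) ^ α := by
          refine Finset.sum_pos' (fun j _ =>
            Real.rpow_nonneg (Finset.sum_nonneg fun i _ =>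
              mul_nonneg (hPnn i) (hCnn i j)) α) ?_
          -- some Q j is positive since ∑_j Q j = 1
          have hQsum : ∑ j, ∑ i, P i * C i j = 1 := by
            rw [Finset.sum_comm]
            have : ∀ i : Fin d, ∑ j, P i * C i j = P i := by
              intro i
              rw [← Finset.mul_sum, hCsum i, mul_one]
            rw [Finset.sum_congr rfl fun i _ => this i, hPsum]
          by_contra h
          push_neg at h
          have hz : ∀ j : Fin d, ∑ i, P i * C i j = 0 := by
            intro j
            have hQnn : 0 ≤ ∑ i, P i * C i j :=
              Finset.sum_nonneg fun i _ => mul_nonneg (hPnn i) (hCnn i j)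
            rcases eq_or_lt_of_le hQnn with h0 | h0
            · exact h0.symm
            · exact absurd (Real.rpow_pos_of_pos h0 α)
                (not_lt.mpr (h j (Finset.mem_univ j)))
          rw [Finset.sum_congr rfl fun j _ => hz j] at hQsum
          simp at hQsum
        have hm : 1 / (1 - α) ≤ 0 := by
          apply div_nonpos_of_nonneg_of_nonpos zero_le_one; linarith
        have hlog : Real.logb 2 (∑ j, (∑ i, P i * C i j) ^ α) ≤ Real.logb 2 (F i₀) :=
          Real.logb_le_logb_of_le (by norm_num) hQpos hbig
        rw [hGF i₀]
        exact mul_le_mul_of_nonpos_left hlog hm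
    linarith
  refine ⟨⟨?_, ?_⟩, i₀, hi₀', by rw [hattain i₀, hInf]⟩
  · -- membership
    refine ⟨proj (a i₀), proj_posSemidef (a i₀), ?_, ?_⟩
    · rw [trace_proj, ha i₀ i₀]; simp
    · rw [hattain i₀, hInf]
  · -- lower bound
    rintro x ⟨ρ, hPSD, htr, rfl⟩
    rw [hInf]
    exact hlb ρ hPSD htr
end

section
/- Let A^(1),…,A^(N) be N orthonormal bases {|a^(i)_j⟩}_{j=1}^d of ℂ^d. Suppose there is a unit vector φ* attaining sup_{‖φ‖=1} Σ_{i,j} |⟨φ|a^(i)_j⟩|⁴ such that the value Σ_j |⟨φ*|a^(i)_j⟩|⁴ is the same for every i = 1,…,N. Set c₂ = inf_{‖φ‖=1} (1/N) Σ_{i=1}^N H₂((|⟨φ|a^(i)_j⟩|²)_j). Then for every POVM {M_k} and density matrices {σ_k}, the average fidelity F_S ≤ 2^{−c₂}; equivalently Q(A^(1),…,A^(N)) = 1 − F_S^max ≥ 1 − 2^{−c₂}. -/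
open Matrix
open scoped BigOperators ComplexOrder

lemma qinner_comm {d : ℕ} (x y : Fin d → ℂ) : qinner y x = star (qinner x y) := by
  unfold qinner
  rw [star_dotProduct]

lemma norm_qinner_comm {d : ℕ} (x y : Fin d → ℂ) : ‖qinner y x‖ = ‖qinner x y‖ := by
  rw [qinner_comm]; exact norm_star _

lemma normsq_re {z : ℂ} : ‖z‖^2 = (star z * z).re := by
  have : (star z * z) = (Complex.normSq z : ℂ) := by
    rw [Complex.normSq_eq_conj_mul_self]; rfl
  rw [this, Complex.ofReal_re, Complex.normSq_eq_norm_sq]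

lemma onb_complete_s4 {d : ℕ} (b : Fin d → Fin d → ℂ) (hb : IsONB b) :
    (Matrix.of fun r j => b j r) * star (Matrix.of fun r j => b j r) = 1 := by
  rw [mul_eq_one_comm]
  ext j j'
  have := hb j j'
  simpa [Matrix.mul_apply, qinner, dotProduct, Matrix.one_apply, mul_comm, eq_comm] using this

lemma parseval {d : ℕ} (b : Fin d → Fin d → ℂ) (hb : IsONB b) (x : Fin d → ℂ) :
    ∑ j, ‖qinner x (b j)‖ ^ 2 = (qinner x x).re := by
  set V : Matrix (Fin d) (Fin d) ℂ := Matrix.of fun r j => b j r with hV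
  have key : ∀ j, qinner (b j) x = (star V *ᵥ x) j := by
    intro j; simp [qinner, dotProduct, Matrix.mulVec, hV, Matrix.conjTranspose_apply]
  have h2 : ∑ j, ‖qinner x (b j)‖ ^ 2 = (∑ j, star ((star V *ᵥ x) j) * ((star V *ᵥ x) j)).re := by
    rw [Complex.re_sum]
    refine Finset.sum_congr rfl fun j _ => ?_
    rw [← norm_qinner_comm, key j, normsq_re]
  rw [h2]
  congr 1
  calc (∑ j, star ((star V *ᵥ x) j) * ((star V *ᵥ x) j))
      = star (star V *ᵥ x) ⬝ᵥ (star V *ᵥ x) := rfl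
    _ = (star x ᵥ* V) ⬝ᵥ (star V *ᵥ x) := by
        rw [star_mulVec, star_eq_conjTranspose, conjTranspose_conjTranspose]
    _ = star x ⬝ᵥ (V *ᵥ (star V *ᵥ x)) := (dotProduct_mulVec _ _ _).symm
    _ = star x ⬝ᵥ ((V * star V) *ᵥ x) := by rw [mulVec_mulVec]
    _ = qinner x x := by rw [onb_complete_s4 b hb, one_mulVec]; rfl

noncomputable def evec {d : ℕ} {A : Matrix (Fin d) (Fin d) ℂ} (hA : A.IsHermitian) (l : Fin d) :
    Fin d → ℂ := fun r => (hA.eigenvectorUnitary : Matrix (Fin d) (Fin d) ℂ) r l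

lemma evec_unit {d : ℕ} {A : Matrix (Fin d) (Fin d) ℂ} (hA : A.IsHermitian) (l : Fin d) :
    qinner (evec hA l) (evec hA l) = 1 := by
  have h := Unitary.coe_star_mul_self hA.eigenvectorUnitary
  have := congrFun (congrFun h l) l
  simpa [Matrix.mul_apply, qinner, dotProduct, evec, Matrix.one_apply,
    Matrix.conjTranspose_apply] using this

lemma quad_form {d : ℕ} {A : Matrix (Fin d) (Fin d) ℂ} (hA : A.IsHermitian) (x : Fin d → ℂ) :
    (qinner x (A *ᵥ x)).re = ∑ l, hA.eigenvalues l * ‖qinner (evec hA l) x‖ ^ 2 := by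
  set U : Matrix (Fin d) (Fin d) ℂ := (hA.eigenvectorUnitary : Matrix (Fin d) (Fin d) ℂ) with hU
  set y : Fin d → ℂ := star U *ᵥ x with hy
  have key : ∀ l, qinner (evec hA l) x = y l := by
    intro l; simp [qinner, dotProduct, Matrix.mulVec, hy, evec, hU, Matrix.conjTranspose_apply]
  have h1 : qinner x (A *ᵥ x) = ∑ l, (hA.eigenvalues l : ℂ) * (star (y l) * y l) := by
    calc qinner x (A *ᵥ x)
        = star x ⬝ᵥ ((U * diagonal (RCLike.ofReal ∘ hA.eigenvalues) * star U) *ᵥ x) := by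
          rw [qinner]
          conv_lhs => rw [hA.spectral_theorem, Unitary.conjStarAlgAut_apply]
      _ = star x ⬝ᵥ (U *ᵥ (diagonal (RCLike.ofReal ∘ hA.eigenvalues) *ᵥ y)) := by
          rw [← mulVec_mulVec, ← mulVec_mulVec]
      _ = (star x ᵥ* U) ⬝ᵥ (diagonal (RCLike.ofReal ∘ hA.eigenvalues) *ᵥ y) := by
          rw [dotProduct_mulVec]
      _ = star y ⬝ᵥ (diagonal (RCLike.ofReal ∘ hA.eigenvalues) *ᵥ y) := by
          rw [hy, star_mulVec, star_eq_conjTranspose, conjTranspose_conjTranspose]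
      _ = ∑ l, (hA.eigenvalues l : ℂ) * (star (y l) * y l) := by
          simp [dotProduct, mulVec_diagonal]
          exact Finset.sum_congr rfl fun l _ => by ring
  rw [h1, Complex.re_sum]
  refine Finset.sum_congr rfl fun l _ => ?_
  rw [key l]
  have h3 : ‖y l‖^2 = (star (y l) * y l).re := by
    have h2 : (star (y l) * y l) = (Complex.normSq (y l) : ℂ) := by
      rw [Complex.normSq_eq_conj_mul_self]; rfl
    rw [h2, Complex.ofReal_re, Complex.normSq_eq_norm_sq]
  rw [h3, Complex.re_ofReal_mul]

lemma trace_eq_sum_eigen {d : ℕ} {A : Matrix (Fin d) (Fin d) ℂ} (hA : A.IsHermitian) :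
    A.trace.re = ∑ l, hA.eigenvalues l := by
  set U : Matrix (Fin d) (Fin d) ℂ := (hA.eigenvectorUnitary : Matrix (Fin d) (Fin d) ℂ) with hU
  have h1 : A.trace = (diagonal (RCLike.ofReal ∘ hA.eigenvalues) : Matrix (Fin d) (Fin d) ℂ).trace := by
    conv_lhs => rw [hA.spectral_theorem]
    rw [Unitary.conjStarAlgAut_apply, Matrix.trace_mul_cycle, Unitary.coe_star_mul_self hA.eigenvectorUnitary, one_mul]
  rw [h1, Matrix.trace, Complex.re_sum]
  simp [Matrix.diag, Matrix.diagonal_apply_eq]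

lemma sumsq_bound {d N : ℕ} (a : Fin N → Fin d → (Fin d → ℂ)) (T : ℝ)
    (hT : ∀ φ : Fin d → ℂ, qinner φ φ = 1 → ∑ i, ∑ j, ‖qinner φ (a i j)‖ ^ 4 ≤ T)
    {A : Matrix (Fin d) (Fin d) ℂ} (hA : A.PosSemidef) :
    ∑ i, ∑ j, ((qinner (a i j) (A *ᵥ a i j)).re)^2 ≤ (A.trace.re)^2 * T := by
  set g : Fin d → ℝ := hA.1.eigenvalues with hg
  have hgnn : ∀ l, 0 ≤ g l := fun l => hA.eigenvalues_nonneg l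
  set q : Fin d → Fin N → Fin d → ℝ := fun l i j => ‖qinner (evec hA.1 l) (a i j)‖ ^ 2 with hq
  have step1 : ∀ i j, ((qinner (a i j) (A *ᵥ a i j)).re)^2
      ≤ (∑ l, g l) * ∑ l, g l * (q l i j)^2 := by
    intro i j
    rw [quad_form hA.1]
    have cs := Finset.sum_mul_sq_le_sq_mul_sq Finset.univ
      (fun l => Real.sqrt (g l)) (fun l => Real.sqrt (g l) * q l i j)
    calc (∑ l, g l * ‖qinner (evec hA.1 l) (a i j)‖ ^ 2)^2
        = (∑ l, Real.sqrt (g l) * (Real.sqrt (g l) * q l i j))^2 := by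
          congr 1; refine Finset.sum_congr rfl fun l _ => ?_
          rw [← mul_assoc, Real.mul_self_sqrt (hgnn l)]
      _ ≤ (∑ l, Real.sqrt (g l)^2) * ∑ l, (Real.sqrt (g l) * q l i j)^2 := cs
      _ = (∑ l, g l) * ∑ l, g l * (q l i j)^2 := by
          congr 1
          · exact Finset.sum_congr rfl fun l _ => Real.sq_sqrt (hgnn l)
          · refine Finset.sum_congr rfl fun l _ => ?_
            rw [mul_pow, Real.sq_sqrt (hgnn l)]
  have step2 : ∑ i, ∑ j, ∑ l, g l * (q l i j)^2 ≤ (∑ l, g l) * T := by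
    have swap : ∑ i, ∑ j, ∑ l, g l * (q l i j)^2 = ∑ l, g l * (∑ i, ∑ j, (q l i j)^2) := by
      calc ∑ i, ∑ j, ∑ l, g l * (q l i j)^2
          = ∑ i, ∑ l, ∑ j, g l * (q l i j)^2 :=
            Finset.sum_congr rfl fun i _ => Finset.sum_comm
        _ = ∑ l, ∑ i, ∑ j, g l * (q l i j)^2 := Finset.sum_comm
        _ = ∑ l, g l * (∑ i, ∑ j, (q l i j)^2) := by simp [Finset.mul_sum]
    rw [swap]
    rw [Finset.sum_mul]
    refine Finset.sum_le_sum fun l _ => ?_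
    refine mul_le_mul_of_nonneg_left ?_ (hgnn l)
    have := hT (evec hA.1 l) (evec_unit hA.1 l)
    calc ∑ i, ∑ j, (q l i j)^2
        = ∑ i, ∑ j, ‖qinner (evec hA.1 l) (a i j)‖ ^ 4 := by
          refine Finset.sum_congr rfl fun i _ => Finset.sum_congr rfl fun j _ => ?_
          rw [hq]; rw [← pow_mul]
      _ ≤ T := this
  calc ∑ i, ∑ j, ((qinner (a i j) (A *ᵥ a i j)).re)^2
      ≤ ∑ i, ∑ j, (∑ l, g l) * ∑ l, g l * (q l i j)^2 :=
        Finset.sum_le_sum fun i _ => Finset.sum_le_sum fun j _ => step1 i j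
    _ = (∑ l, g l) * ∑ i, ∑ j, ∑ l, g l * (q l i j)^2 := by
        simp [Finset.mul_sum]
    _ ≤ (∑ l, g l) * ((∑ l, g l) * T) := by
        refine mul_le_mul_of_nonneg_left step2 (Finset.sum_nonneg fun l _ => hgnn l)
    _ = (A.trace.re)^2 * T := by rw [trace_eq_sum_eigen hA.1]; ring

theorem Q_ge_renyi2_EUR {d N : ℕ} (hd : 0 < d) (hN : 0 < N)
    (a : Fin N → Fin d → (Fin d → ℂ)) (ha : ∀ i, IsONB (a i))
    (φs : Fin d → ℂ) (hφs : qinner φs φs = 1)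
    (hmax : ∀ φ : Fin d → ℂ, qinner φ φ = 1 →
      ∑ i, ∑ j, ‖qinner φ (a i j)‖ ^ 4 ≤ ∑ i, ∑ j, ‖qinner φs (a i j)‖ ^ 4)
    (heq : ∀ i i' : Fin N,
      ∑ j, ‖qinner φs (a i j)‖ ^ 4 = ∑ j, ‖qinner φs (a i' j)‖ ^ 4)
    (m : ℕ) (M σ : Fin m → Matrix (Fin d) (Fin d) ℂ)
    (hM : ∀ k, (M k).PosSemidef) (hMsum : ∑ k, M k = 1)
    (hσ : ∀ k, (σ k).PosSemidef) (hσtr : ∀ k, (σ k).trace = 1) :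
    (1 / ((N : ℝ) * d)) * ∑ k, ∑ i, ∑ j,
        (qinner (a i j) (M k *ᵥ a i j)).re * (qinner (a i j) (σ k *ᵥ a i j)).re
      ≤ (2 : ℝ) ^ (-(sInf {x : ℝ | ∃ φ : Fin d → ℂ, qinner φ φ = 1 ∧
          x = (1 / (N : ℝ)) * ∑ i, -Real.logb 2 (∑ j, ‖qinner φ (a i j)‖ ^ 4)})) := by
  set T : ℝ := ∑ i, ∑ j, ‖qinner φs (a i j)‖ ^ 4 with hTdef
  have hT0 : 0 ≤ T := Finset.sum_nonneg fun i _ => Finset.sum_nonneg fun j _ => by positivity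
  -- nonnegativity of entries
  have hx : ∀ (k : Fin m) (i : Fin N) (j : Fin d), 0 ≤ (qinner (a i j) (M k *ᵥ a i j)).re :=
    fun k i j => (Complex.le_def.mp ((hM k).dotProduct_mulVec_nonneg (a i j))).1
  have hy : ∀ (k : Fin m) (i : Fin N) (j : Fin d), 0 ≤ (qinner (a i j) (σ k *ᵥ a i j)).re :=
    fun k i j => (Complex.le_def.mp ((hσ k).dotProduct_mulVec_nonneg (a i j))).1
  -- trace facts
  have hMtrnn : ∀ k, 0 ≤ (M k).trace.re := by
    intro k
    rw [trace_eq_sum_eigen (hM k).1]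
    exact Finset.sum_nonneg fun l _ => (hM k).eigenvalues_nonneg l
  -- per-k bound
  have perk : ∀ k, (∑ i, ∑ j,
      (qinner (a i j) (M k *ᵥ a i j)).re * (qinner (a i j) (σ k *ᵥ a i j)).re)
      ≤ (M k).trace.re * T := by
    intro k
    have hsx := sumsq_bound a T hmax (hM k)
    have hsy := sumsq_bound a T hmax (hσ k)
    have hytr : ((σ k).trace.re)^2 = 1 := by rw [hσtr k]; norm_num
    rw [hytr, one_mul] at hsy
    have sum_nn : 0 ≤ ∑ i, ∑ j,
        (qinner (a i j) (M k *ᵥ a i j)).re * (qinner (a i j) (σ k *ᵥ a i j)).re :=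
      Finset.sum_nonneg fun i _ => Finset.sum_nonneg fun j _ =>
        mul_nonneg (hx k i j) (hy k i j)
    have cs : (∑ i, ∑ j,
        (qinner (a i j) (M k *ᵥ a i j)).re * (qinner (a i j) (σ k *ᵥ a i j)).re)^2
        ≤ (∑ i, ∑ j, ((qinner (a i j) (M k *ᵥ a i j)).re)^2)
          * (∑ i, ∑ j, ((qinner (a i j) (σ k *ᵥ a i j)).re)^2) := by
      have := Finset.sum_mul_sq_le_sq_mul_sq (Finset.univ : Finset (Fin N × Fin d))
        (fun p => (qinner (a p.1 p.2) (M k *ᵥ a p.1 p.2)).re)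
        (fun p => (qinner (a p.1 p.2) (σ k *ᵥ a p.1 p.2)).re)
      simpa [Fintype.sum_prod_type] using this
    have sq_le : (∑ i, ∑ j,
        (qinner (a i j) (M k *ᵥ a i j)).re * (qinner (a i j) (σ k *ᵥ a i j)).re)^2
        ≤ ((M k).trace.re * T)^2 := by
      calc _ ≤ (((M k).trace.re)^2 * T) * T := by
              refine le_trans cs ?_
              exact mul_le_mul hsx hsy (Finset.sum_nonneg fun i _ =>
                Finset.sum_nonneg fun j _ => sq_nonneg _) (by positivity)
        _ = ((M k).trace.re * T)^2 := by ring
    have := Real.sqrt_le_sqrt sq_le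
    rwa [Real.sqrt_sq sum_nn, Real.sqrt_sq (mul_nonneg (hMtrnn k) hT0)] at this
  -- sum over k
  have sumtr : ∑ k, (M k).trace.re = (d : ℝ) := by
    have h1 : ∑ k, (M k).trace = ((1 : Matrix (Fin d) (Fin d) ℂ)).trace := by
      rw [← Matrix.trace_sum, hMsum]
    calc ∑ k, (M k).trace.re = (∑ k, (M k).trace).re := (Complex.re_sum _ _).symm
      _ = ((1 : Matrix (Fin d) (Fin d) ℂ)).trace.re := by rw [h1]
      _ = (d : ℝ) := by simp [Matrix.trace_one]
  have stepA : (1 / ((N : ℝ) * d)) * ∑ k, ∑ i, ∑ j,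
      (qinner (a i j) (M k *ᵥ a i j)).re * (qinner (a i j) (σ k *ᵥ a i j)).re ≤ T / N := by
    have h2 : ∑ k, ∑ i, ∑ j,
        (qinner (a i j) (M k *ᵥ a i j)).re * (qinner (a i j) (σ k *ᵥ a i j)).re
        ≤ (d : ℝ) * T := by
      calc _ ≤ ∑ k, (M k).trace.re * T := Finset.sum_le_sum fun k _ => perk k
        _ = (d : ℝ) * T := by rw [← Finset.sum_mul, sumtr]
    have hNd : (0:ℝ) < (N : ℝ) * d := by positivity
    calc (1 / ((N : ℝ) * d)) * ∑ k, ∑ i, ∑ j,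
        (qinner (a i j) (M k *ᵥ a i j)).re * (qinner (a i j) (σ k *ᵥ a i j)).re
        ≤ (1 / ((N : ℝ) * d)) * ((d : ℝ) * T) := by
          exact mul_le_mul_of_nonneg_left h2 (by positivity)
      _ = T / N := by field_simp
  -- Step B
  set i0 : Fin N := ⟨0, hN⟩ with hi0
  set v : ℝ := ∑ j, ‖qinner φs (a i0 j)‖ ^ 4 with hv
  have hTv : T = (N : ℝ) * v := by
    rw [hTdef]
    rw [Finset.sum_congr rfl fun i _ => heq i i0]
    simp [Finset.sum_const, Finset.card_univ, hv]
  have hv_pos : 0 < v := by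
    have hps : ∑ j, ‖qinner φs (a i0 j)‖ ^ 2 = 1 := by
      rw [parseval (a i0) (ha i0) φs, hφs]; rfl
    have hne : ∑ j, ‖qinner φs (a i0 j)‖ ^ 2 ≠ 0 := by rw [hps]; norm_num
    obtain ⟨j0, _, hj0⟩ := Finset.exists_ne_zero_of_sum_ne_zero hne
    have h4 : (0:ℝ) < ‖qinner φs (a i0 j0)‖ ^ 4 := by
      have : ‖qinner φs (a i0 j0)‖ ≠ 0 := fun h => hj0 (by rw [h]; norm_num)
      positivity
    rw [hv]
    exact lt_of_lt_of_le h4 (Finset.single_le_sum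
      (f := fun j => ‖qinner φs (a i0 j)‖ ^ 4) (fun j _ => by positivity)
      (Finset.mem_univ j0))
  -- the set
  set S : Set ℝ := {x : ℝ | ∃ φ : Fin d → ℂ, qinner φ φ = 1 ∧
      x = (1 / (N : ℝ)) * ∑ i, -Real.logb 2 (∑ j, ‖qinner φ (a i j)‖ ^ 4)} with hS
  have hsub1 : ∀ (φ : Fin d → ℂ), qinner φ φ = 1 → ∀ i,
      ∑ j, ‖qinner φ (a i j)‖ ^ 4 ≤ 1 := by
    intro φ hφ i
    have hps : ∑ j, ‖qinner φ (a i j)‖ ^ 2 = 1 := by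
      rw [parseval (a i) (ha i) φ, hφ]; rfl
    calc ∑ j, ‖qinner φ (a i j)‖ ^ 4 = ∑ j, (‖qinner φ (a i j)‖ ^ 2) ^ 2 := by
          refine Finset.sum_congr rfl fun j _ => by rw [← pow_mul]
      _ ≤ (∑ j, ‖qinner φ (a i j)‖ ^ 2) ^ 2 :=
          Finset.sum_sq_le_sq_sum_of_nonneg fun j _ => by positivity
      _ = 1 := by rw [hps]; norm_num
  have hbdd : BddBelow S := by
    refine ⟨0, fun x hx => ?_⟩
    obtain ⟨φ, hφ, rfl⟩ := hx
    refine mul_nonneg (by positivity) (Finset.sum_nonneg fun i _ => ?_)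
    rw [neg_nonneg]
    exact Real.logb_nonpos one_lt_two
      (Finset.sum_nonneg fun j _ => by positivity) (hsub1 φ hφ i)
  have hmem : -Real.logb 2 v ∈ S := by
    refine ⟨φs, hφs, ?_⟩
    have : ∀ i, -Real.logb 2 (∑ j, ‖qinner φs (a i j)‖ ^ 4) = -Real.logb 2 v := by
      intro i; rw [heq i i0]
    rw [Finset.sum_congr rfl fun i _ => this i]
    rw [Finset.sum_const, Finset.card_univ, Fintype.card_fin, nsmul_eq_mul]
    field_simp
  have hinf : sInf S ≤ -Real.logb 2 v := csInf_le hbdd hmem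
  have stepB : v ≤ (2 : ℝ) ^ (-(sInf S)) := by
    have h5 : Real.logb 2 v ≤ -(sInf S) := by linarith
    calc v = (2 : ℝ) ^ (Real.logb 2 v) :=
          (Real.rpow_logb (by norm_num) (by norm_num) hv_pos).symm
      _ ≤ (2 : ℝ) ^ (-(sInf S)) :=
          Real.rpow_le_rpow_of_exponent_le one_le_two h5
  have : T / N = v := by rw [hTv]; field_simp
  calc (1 / ((N : ℝ) * d)) * ∑ k, ∑ i, ∑ j,
      (qinner (a i j) (M k *ᵥ a i j)).re * (qinner (a i j) (σ k *ᵥ a i j)).re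
      ≤ T / N := stepA
    _ = v := this
    _ ≤ (2 : ℝ) ^ (-(sInf S)) := stepB
end
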